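/- Let b ≥ 3 and q ≥ 3 be integers and let k ∈ {0, …, ⌊q/2⌋}. Let D_b ∈ ℝ^{b×b} be the diagonal matrix with (D_b)₁₁ = b+1 and (D_b)_{jj} = b−1 for j ≥ 2, and set H_k = D_b^{−1/2}(1_b 1_bᵀ + α_k e₁e₁ᵀ − I_b)D_b^{−1/2}. Then H_k(ξ₁⁽ᵏ⁾ e₁ + g₁) = λ₁⁽ᵏ⁾ (ξ₁⁽ᵏ⁾ e₁ + g₁) and H_k(ξ₂⁽ᵏ⁾ e₁ + g₁) = λ₂⁽ᵏ⁾ (ξ₂⁽ᵏ⁾ e₁ + g₁). -/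

import Mathlib

open Matrix

/-- `α_k = 2 cos(2πk/q)`. -/
noncomputable def rocAlpha (q k : ℕ) : ℝ := 2 * Real.cos (2 * Real.pi * k / q)

/-- `β_k = (1/2)(α_k √((b−1)/(b+1)) − √(b²−1) + √((b+1)/(b−1)))`. -/
noncomputable def rocBeta (b q k : ℕ) : ℝ :=
  (1 / 2) * (rocAlpha q k * Real.sqrt (((b : ℝ) - 1) / ((b : ℝ) + 1)) -
    Real.sqrt ((b : ℝ) ^ 2 - 1) + Real.sqrt (((b : ℝ) + 1) / ((b : ℝ) - 1)))

/-- `ξ₁⁽ᵏ⁾ = β_k + √(β_k² + (b−1))`. -/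
noncomputable def rocXi1 (b q k : ℕ) : ℝ :=
  rocBeta b q k + Real.sqrt ((rocBeta b q k) ^ 2 + ((b : ℝ) - 1))

/-- `ξ₂⁽ᵏ⁾ = β_k − √(β_k² + (b−1))`. -/
noncomputable def rocXi2 (b q k : ℕ) : ℝ :=
  rocBeta b q k - Real.sqrt ((rocBeta b q k) ^ 2 + ((b : ℝ) - 1))

/-- `λ₁⁽ᵏ⁾ = ξ₁⁽ᵏ⁾/√(b²−1) + 1 − 1/(b−1)`. -/
noncomputable def rocLam1 (b q k : ℕ) : ℝ :=
  rocXi1 b q k / Real.sqrt ((b : ℝ) ^ 2 - 1) + 1 - 1 / ((b : ℝ) - 1)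

/-- `λ₂⁽ᵏ⁾ = ξ₂⁽ᵏ⁾/√(b²−1) + 1 − 1/(b−1)`. -/
noncomputable def rocLam2 (b q k : ℕ) : ℝ :=
  rocXi2 b q k / Real.sqrt ((b : ℝ) ^ 2 - 1) + 1 - 1 / ((b : ℝ) - 1)

/-- Block vector `ξ e₁ + g₁ ∈ ℝ^b` (value `ξ` at the corner, `1` at internal vertices). -/
noncomputable def blockVec (b : ℕ) (ξ : ℝ) : Fin b → ℝ :=
  fun a => if a.val = 0 then ξ else 1

/-- The local block diagonal degree matrix `D_b`: `(D_b)₁₁ = b+1`, `(D_b)_{jj} = b−1`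
for `j ≥ 2`. -/
noncomputable def localDeg (b : ℕ) : Matrix (Fin b) (Fin b) ℝ :=
  Matrix.diagonal fun a => if a.val = 0 then (b : ℝ) + 1 else (b : ℝ) - 1

/-- The local matrix `H_k = D_b^{−1/2}(1_b 1_bᵀ + α_k e₁e₁ᵀ − I_b)D_b^{−1/2}`,
written with `D_b^{−1/2} = diag(1/√((D_b)_{jj}))`. -/
noncomputable def localH (b q k : ℕ) : Matrix (Fin b) (Fin b) ℝ :=
  Matrix.diagonal (fun a => 1 / Real.sqrt (if a.val = 0 then (b : ℝ) + 1 else (b : ℝ) - 1)) *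
    (Matrix.of (fun _ _ => (1 : ℝ)) + rocAlpha q k •
        Matrix.of (fun a c : Fin b => if a.val = 0 ∧ c.val = 0 then (1 : ℝ) else 0) - 1) *
    Matrix.diagonal (fun a => 1 / Real.sqrt (if a.val = 0 then (b : ℝ) + 1 else (b : ℝ) - 1))

/-- `ξᵢ⁽ᵏ⁾ e₁ + g₁` is an eigenvector of the local matrix `H_k`
with eigenvalue `λᵢ⁽ᵏ⁾`, for `i = 1, 2`. -/
lemma sum2 {b : ℕ} (hb : 0 < b) (A B : ℝ) :
    ∑ j : Fin b, (if (j : ℕ) = 0 then A else B) = A + ((b : ℝ) - 1) * B := by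
  have : (fun j : Fin b => if (j : ℕ) = 0 then A else B) =
      fun j : Fin b => B + (if j = ⟨0, hb⟩ then A - B else 0) := by
    funext j
    rcases eq_or_ne j ⟨0, hb⟩ with h | h
    · simp [h]
    · have hj : (j : ℕ) ≠ 0 := fun hc => h (Fin.ext hc)
      simp [hj, h]
  rw [this, Finset.sum_add_distrib, Finset.sum_const, Finset.sum_ite_eq']
  simp [Finset.card_univ]
  ring

lemma sum3 {b : ℕ} (i : Fin b) (hi : (i : ℕ) ≠ 0) (A B C : ℝ) :
    ∑ j : Fin b, (if (j : ℕ) = 0 then A else if j = i then B else C) =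
      A + B + ((b : ℝ) - 2) * C := by
  have hb : 0 < b := i.pos
  have h0i : (⟨0, hb⟩ : Fin b) ≠ i := by
    intro hc; apply hi; rw [← hc]
  have : (fun j : Fin b => if (j : ℕ) = 0 then A else if j = i then B else C) =
      fun j : Fin b =>
        C + (if j = ⟨0, hb⟩ then A - C else 0) + (if j = i then B - C else 0) := by
    funext j
    by_cases hj0 : j = ⟨0, hb⟩
    · simp [hj0, h0i]
    · have hjv : (j : ℕ) ≠ 0 := fun hc => hj0 (Fin.ext hc)
      by_cases hji : j = i
      · simp [hji, hi, Ne.symm h0i]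
      · simp [hjv, hj0, hji]
  rw [this, Finset.sum_add_distrib, Finset.sum_add_distrib, Finset.sum_const,
    Finset.sum_ite_eq', Finset.sum_ite_eq']
  simp [Finset.card_univ]
  ring

lemma key (b q k : ℕ) (hb : 3 ≤ b) (ξ : ℝ)
    (hξ : ξ ^ 2 = 2 * rocBeta b q k * ξ + ((b : ℝ) - 1)) :
    (localH b q k).mulVec (blockVec b ξ) =
      (ξ / Real.sqrt ((b : ℝ) ^ 2 - 1) + 1 - 1 / ((b : ℝ) - 1)) • blockVec b ξ := by
  have hbR : (3 : ℝ) ≤ (b : ℝ) := by exact_mod_cast hb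
  have h1 : (0 : ℝ) < (b : ℝ) + 1 := by linarith
  have h2 : (0 : ℝ) < (b : ℝ) - 1 := by linarith
  set s1 := Real.sqrt ((b : ℝ) + 1) with hs1
  set s2 := Real.sqrt ((b : ℝ) - 1) with hs2
  have hs1p : 0 < s1 := Real.sqrt_pos.2 h1
  have hs2p : 0 < s2 := Real.sqrt_pos.2 h2
  have hs1sq : s1 ^ 2 = (b : ℝ) + 1 := Real.sq_sqrt h1.le
  have hs2sq : s2 ^ 2 = (b : ℝ) - 1 := Real.sq_sqrt h2.le
  have hsq : Real.sqrt ((b : ℝ) ^ 2 - 1) = s1 * s2 := by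
    rw [hs1, hs2, ← Real.sqrt_mul h1.le]
    ring_nf
  have hβ : rocBeta b q k = (1 / 2) * (rocAlpha q k * (s2 / s1) - s1 * s2 + s1 / s2) := by
    rw [rocBeta, hsq, Real.sqrt_div h2.le, Real.sqrt_div h1.le, ← hs1, ← hs2]
  set α := rocAlpha q k with hα
  set β := rocBeta b q k with hβdef
  have hξ2 : ξ ^ 2 = (α * (s2 / s1) - s1 * s2 + s1 / s2) * ξ + s2 ^ 2 := by
    linear_combination hξ + 2 * ξ * hβ - hs2sq
  funext i
  simp only [Matrix.mulVec, dotProduct, localH, Matrix.mul_diagonal, Matrix.diagonal_mul,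
    Matrix.sub_apply, Matrix.add_apply, Matrix.smul_apply, Matrix.of_apply, Matrix.one_apply,
    smul_eq_mul, blockVec, Pi.smul_apply, ← hα, ← hs1, ← hs2]
  by_cases hi : (i : ℕ) = 0
  · rw [Finset.sum_congr rfl (fun j _ => ?_), sum2 (by omega)
      (1 / s1 * (1 + α * 1 - 1) * (1 / s1) * ξ) (1 / s1 * (1 + α * 0 - 0) * (1 / s2) * 1)]
    · simp only [hi, if_true, hsq]
      rw [← hs2sq,
        show (ξ / (s1 * s2) + 1 - 1 / s2 ^ 2) * ξ = ξ ^ 2 / (s1 * s2) + ξ - ξ / s2 ^ 2 by ring,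
        hξ2]
      field_simp
      ring
    · by_cases hj : (j : ℕ) = 0
      · have : i = j := Fin.ext (by omega)
        simp [hi, hj, ← this, hs1, hs2]
      · have : i ≠ j := fun hc => hj (by rw [← hc]; exact hi)
        simp [hi, hj, this, hs1, hs2]
  · rw [Finset.sum_congr rfl (fun j _ => ?_), sum3 i hi
      (1 / s2 * (1 + α * 0 - 0) * (1 / s1) * ξ) (1 / s2 * (1 + α * 0 - 1) * (1 / s2) * 1)
      (1 / s2 * (1 + α * 0 - 0) * (1 / s2) * 1)]
    · simp only [hi, if_false, hsq]
      have hb2 : (b : ℝ) - 2 = s2 ^ 2 - 1 := by rw [hs2sq]; ring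
      rw [hb2, ← hs2sq]
      field_simp
      ring
    · by_cases hj : (j : ℕ) = 0
      · have : i ≠ j := fun hc => hi (by rw [hc]; exact hj)
        simp [hi, hj, this, hs1, hs2]
      · rcases eq_or_ne j i with h2 | h2
        · simp [hi, hj, h2]
        · have : i ≠ j := fun hc => h2 hc.symm
          simp [hi, hj, h2, this, hs1, hs2]

theorem local_block_eigenpairs (b q : ℕ) (hb : 3 ≤ b) (hq : 3 ≤ q)
    (k : ℕ) (hk : k ≤ q / 2) :
    (localH b q k).mulVec (blockVec b (rocXi1 b q k)) =
      rocLam1 b q k • blockVec b (rocXi1 b q k) ∧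
    (localH b q k).mulVec (blockVec b (rocXi2 b q k)) =
      rocLam2 b q k • blockVec b (rocXi2 b q k) := by
  have hbR : (3 : ℝ) ≤ (b : ℝ) := by exact_mod_cast hb
  have hr : Real.sqrt ((rocBeta b q k) ^ 2 + ((b : ℝ) - 1)) ^ 2 =
      (rocBeta b q k) ^ 2 + ((b : ℝ) - 1) :=
    Real.sq_sqrt (by nlinarith [sq_nonneg (rocBeta b q k)])
  constructor
  · rw [rocLam1]
    exact key b q k hb _ (by rw [rocXi1]; linear_combination hr)
  · rw [rocLam2]
    exact key b q k hb _ (by rw [rocXi2]; linear_combination hr)
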